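/- Let E, E', E'' be real normed vector spaces, U ⊆ E and U' ⊆ E' open sets, f : E → E' with f(U) ⊆ U', and g : E' → E''. Let F_f be a slope extension of f on U, F_g a slope extension of g on U', and F_{g∘f} a slope extension of g ∘ f on U. Then for every (x, v, t) ∈ U^[1], the element (f(x), F_f(x,v,t), t) lies in U'^[1] and the chain rule for extended slopes holds: F_{g∘f}(x, v, t) = F_g(f(x), F_f(x,v,t), t). -/

import Mathlib

open Topology Filter


/-- A slope extension of `h` on `U`. -/
def IsSlopeExt {E W : Type*} [NormedAddCommGroup E] [NormedSpace ℝ E]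
    [NormedAddCommGroup W] [NormedSpace ℝ W]
    (h : E → W) (U : Set E) (F : E × E × ℝ → W) : Prop :=
  ContinuousOn F {p : E × E × ℝ | p.1 ∈ U ∧ p.1 + p.2.2 • p.2.1 ∈ U} ∧
  ∀ p : E × E × ℝ, p.1 ∈ U → p.1 + p.2.2 • p.2.1 ∈ U → p.2.2 ≠ 0 →
    F p = (p.2.2)⁻¹ • (h (p.1 + p.2.2 • p.2.1) - h p.1)

/-- Chain rule for extended slopes:
`F_{g∘f}(x, v, t) = F_g(f(x), F_f(x,v,t), t)` on `U^[1]`. -/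
theorem slope_extension_chain_rule {E E' E'' : Type*}
    [NormedAddCommGroup E] [NormedSpace ℝ E]
    [NormedAddCommGroup E'] [NormedSpace ℝ E']
    [NormedAddCommGroup E''] [NormedSpace ℝ E'']
    (U : Set E) (U' : Set E') (hU : IsOpen U) (hU' : IsOpen U')
    (f : E → E') (hf : Set.MapsTo f U U') (g : E' → E'')
    (Ff : E × E × ℝ → E') (hFf : IsSlopeExt f U Ff)
    (Fg : E' × E' × ℝ → E'') (hFg : IsSlopeExt g U' Fg)
    (Fgf : E × E × ℝ → E'') (hFgf : IsSlopeExt (g ∘ f) U Fgf) :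
    ∀ (x v : E) (t : ℝ), x ∈ U → x + t • v ∈ U →
      ((f x ∈ U' ∧ f x + t • Ff (x, v, t) ∈ U') ∧
        Fgf (x, v, t) = Fg (f x, Ff (x, v, t), t)) := by
  have key : ∀ (x v : E) (t : ℝ), x ∈ U → x + t • v ∈ U → t ≠ 0 →
      f x + t • Ff (x, v, t) = f (x + t • v) := by
    intro x v t hx hxv ht
    rw [hFf.2 (x, v, t) hx hxv ht]
    simp [smul_inv_smul₀ ht]
  intro x v t hx hxv
  rcases eq_or_ne t 0 with rfl | ht
  · have hfx : f x ∈ U' := hf hx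
    refine ⟨⟨hfx, by simpa using hfx⟩, ?_⟩
    set S : Set ℝ := {s | x + s • v ∈ U} with hS
    have hSopen : IsOpen S := hU.preimage (by continuity)
    have h0S : (0:ℝ) ∈ S := by simpa [hS] using hx
    set φ : ℝ → E × E × ℝ := fun s => (x, v, s) with hφ
    have hφc : Continuous φ := by continuity
    have hφmaps : ∀ s ∈ S, φ s ∈ {p : E × E × ℝ | p.1 ∈ U ∧ p.1 + p.2.2 • p.2.1 ∈ U} :=
      fun s hs => ⟨hx, hs⟩
    set ψ : ℝ → E' × E' × ℝ := fun s => (f x, Ff (φ s), s) with hψ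
    have hFfφ : ContinuousOn (fun s => Ff (φ s)) S :=
      hFf.1.comp hφc.continuousOn hφmaps
    have hψc : ContinuousOn ψ S :=
      continuousOn_const.prodMk (hFfφ.prodMk continuousOn_id)
    have hψmaps : ∀ s ∈ S, ψ s ∈ {p : E' × E' × ℝ | p.1 ∈ U' ∧ p.1 + p.2.2 • p.2.1 ∈ U'} := by
      intro s hs
      refine ⟨hfx, ?_⟩
      rcases eq_or_ne s 0 with rfl | hs0
      · simpa [hψ] using hfx
      · show f x + s • Ff (x, v, s) ∈ U'
        rw [key x v s hx hs hs0]
        exact hf hs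
    have h1 : ContinuousWithinAt (fun s => Fgf (φ s)) S 0 :=
      (hFgf.1.comp hφc.continuousOn hφmaps) 0 h0S
    have h2 : ContinuousWithinAt (fun s => Fg (ψ s)) S 0 :=
      (hFg.1.comp hψc hψmaps) 0 h0S
    have hSnhds : S ∈ 𝓝 (0:ℝ) := hSopen.mem_nhds h0S
    have hne : (𝓝[S \ {0}] (0:ℝ)).NeBot := by
      have : S \ {0} = {(0:ℝ)}ᶜ ∩ S := by ext; simp [and_comm]
      rw [this, nhdsWithin_inter_of_mem' (mem_nhdsWithin_of_mem_nhds hSnhds)]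
      exact (by infer_instance : (𝓝[≠] (0:ℝ)).NeBot)
    have t1 : Filter.Tendsto (fun s => Fgf (φ s)) (𝓝[S \ {0}] 0) (𝓝 (Fgf (φ 0))) :=
      h1.mono_left (nhdsWithin_mono _ Set.diff_subset)
    have t2 : Filter.Tendsto (fun s => Fgf (φ s)) (𝓝[S \ {0}] 0) (𝓝 (Fg (ψ 0))) := by
      refine (h2.mono_left (nhdsWithin_mono _ Set.diff_subset)).congr' ?_
      filter_upwards [self_mem_nhdsWithin] with s hs
      obtain ⟨hsS, hs0⟩ := hs
      have hs0' : s ≠ 0 := hs0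
      show Fg (ψ s) = Fgf (φ s)
      have hm := (hψmaps s hsS).2
      rw [hψ, hφ]
      have hsS' : x + s • v ∈ U := hsS
      rw [hFg.2 _ hfx hm hs0', hFgf.2 _ hx hsS' hs0']
      show s⁻¹ • (g (f x + s • Ff (x, v, s)) - g (f x)) = _
      rw [key x v s hx hsS hs0']
      rfl
    exact tendsto_nhds_unique t1 t2
  · have h1 : f x + t • Ff (x, v, t) = f (x + t • v) := key x v t hx hxv ht
    have hfx : f x ∈ U' := hf hx
    have hmem : f x + t • Ff (x, v, t) ∈ U' := h1 ▸ hf hxv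
    refine ⟨⟨hfx, hmem⟩, ?_⟩
    rw [hFg.2 _ hfx hmem ht, hFgf.2 _ hx hxv ht]
    show t⁻¹ • ((g ∘ f) (x + t • v) - (g ∘ f) x) = t⁻¹ • (g (f x + t • Ff (x, v, t)) - g (f x))
    rw [h1]
    rfl
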